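/- Let A be a positive contraction on a complex Hilbert space H (0 ≤ A ≤ I). Then for all x, y ∈ H, 0 ≤ √(⟨(A − A²)x, x⟩·⟨(A − A²)y, y⟩) − |⟨(A − A²)x, y⟩| ≤ (‖x‖‖y‖ − |⟨x,y⟩|)/4. -/

import Mathlib

open scoped InnerProductSpace

set_option maxHeartbeats 1000000 in

theorem contraction_refinement {H : Type*} [NormedAddCommGroup H]
    [InnerProductSpace ℂ H] [CompleteSpace H] (A : H →L[ℂ] H)
    (hA : A.IsPositive) (hA1 : ((1 : H →L[ℂ] H) - A).IsPositive) (x y : H) :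
    0 ≤ Real.sqrt ((⟪(A - A * A) x, x⟫_ℂ).re * (⟪(A - A * A) y, y⟫_ℂ).re) -
        ‖⟪(A - A * A) x, y⟫_ℂ‖ ∧
      Real.sqrt ((⟪(A - A * A) x, x⟫_ℂ).re * (⟪(A - A * A) y, y⟫_ℂ).re) -
        ‖⟪(A - A * A) x, y⟫_ℂ‖ ≤ (‖x‖ * ‖y‖ - ‖⟪x, y⟫_ℂ‖) / 4 := by
  have hA0 : (0 : H →L[ℂ] H) ≤ A := (ContinuousLinearMap.nonneg_iff_isPositive _).mpr hA
  -- square root of A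
  set R : H →L[ℂ] H := CFC.sqrt A with hRdef
  have hR0 : (0 : H →L[ℂ] H) ≤ R := CFC.sqrt_nonneg A
  have hRR : R * R = A := CFC.sqrt_mul_sqrt_self A hA0
  -- B := A - A*A is positive
  have hB : (A - A * A).IsPositive := by
    have h := hA1.conj_adjoint R
    have heq : R ∘L (((1 : H →L[ℂ] H) - A) ∘L ContinuousLinearMap.adjoint R) = A - A * A := by
      rw [(IsSelfAdjoint.of_nonneg hR0).adjoint_eq]
      show R * (((1 : H →L[ℂ] H) - A) * R) = A - A * A
      rw [← hRR]; noncomm_ring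
    rwa [heq] at h
  have hB0 : (0 : H →L[ℂ] H) ≤ A - A * A := (ContinuousLinearMap.nonneg_iff_isPositive _).mpr hB
  set S : H →L[ℂ] H := CFC.sqrt (A - A * A) with hSdef
  have hS0 : (0 : H →L[ℂ] H) ≤ S := CFC.sqrt_nonneg _
  have hSS : S * S = A - A * A := CFC.sqrt_mul_sqrt_self _ hB0
  have hSsym : ∀ u v : H, ⟪S u, v⟫_ℂ = ⟪u, S v⟫_ℂ :=
    ContinuousLinearMap.isSelfAdjoint_iff_isSymmetric.mp (IsSelfAdjoint.of_nonneg hS0)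
  have hBin : ∀ u v : H, ⟪(A - A * A) u, v⟫_ℂ = ⟪S u, S v⟫_ℂ := by
    intro u v
    rw [← hSS, ContinuousLinearMap.mul_apply]
    exact hSsym (S u) v
  have hsym : ∀ u v : H, ⟪A u, v⟫_ℂ = ⟪u, A v⟫_ℂ :=
    fun u v => hA.1 u v
  -- key identity
  have hkey : ∀ u v : H, ⟪(A - A * A) u, v⟫_ℂ =
      (1/4 : ℂ) * ⟪u, v⟫_ℂ - ⟪A u - (1/2 : ℂ) • u, A v - (1/2 : ℂ) • v⟫_ℂ := by
    intro u v
    simp only [ContinuousLinearMap.sub_apply, ContinuousLinearMap.mul_apply,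
      inner_sub_left, inner_sub_right, inner_smul_left, inner_smul_right]
    rw [← hsym (A u) v, ← hsym u v]
    have h12 : starRingEnd ℂ (1/2 : ℂ) = 1/2 := by simp [Complex.conj_ofNat]
    rw [h12]
    ring
  -- real parts
  have hre : ∀ u : H, (⟪(A - A * A) u, u⟫_ℂ).re
      = ‖u‖ ^ 2 / 4 - ‖A u - (1/2 : ℂ) • u‖ ^ 2 := by
    intro u
    rw [hkey u u]
    have h1 : (⟪u, u⟫_ℂ).re = ‖u‖ ^ 2 := by simpa using inner_self_eq_norm_sq (𝕜 := ℂ) u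
    have h2 : (⟪A u - (1/2 : ℂ) • u, A u - (1/2 : ℂ) • u⟫_ℂ).re
        = ‖A u - (1/2 : ℂ) • u‖ ^ 2 := by simpa using inner_self_eq_norm_sq (𝕜 := ℂ) _
    have h3 : (⟪u, u⟫_ℂ).im = 0 := by
      rw [inner_self_eq_norm_sq_to_K, sq]
      simp
    rw [Complex.sub_re, Complex.mul_re, h3, h1, h2]
    norm_num [Complex.div_re]
    ring
  have hreS : ∀ u : H, (⟪(A - A * A) u, u⟫_ℂ).re = ‖S u‖ ^ 2 := by
    intro u
    rw [hBin u u]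
    simpa using inner_self_eq_norm_sq (𝕜 := ℂ) (S u)
  -- sqrt of product
  have hsqrt : Real.sqrt ((⟪(A - A * A) x, x⟫_ℂ).re * (⟪(A - A * A) y, y⟫_ℂ).re)
      = ‖S x‖ * ‖S y‖ := by
    rw [hreS x, hreS y, ← mul_pow, Real.sqrt_sq (by positivity)]
  have hCS : ‖⟪(A - A * A) x, y⟫_ℂ‖ ≤ ‖S x‖ * ‖S y‖ := by
    rw [hBin x y]; exact norm_inner_le_norm _ _
  refine ⟨by rw [hsqrt]; linarith, ?_⟩
  -- part 2
  set u : H := A x - (1/2 : ℂ) • x with hu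
  set v : H := A y - (1/2 : ℂ) • y with hv
  have hpx : ‖S x‖ ^ 2 = ‖x‖ ^ 2 / 4 - ‖u‖ ^ 2 := (hreS x).symm.trans (hre x)
  have hpy : ‖S y‖ ^ 2 = ‖y‖ ^ 2 / 4 - ‖v‖ ^ 2 := (hreS y).symm.trans (hre y)
  have hcx : ‖u‖ ≤ ‖x‖ / 2 := by
    nlinarith [sq_nonneg (‖S x‖), norm_nonneg u, norm_nonneg x]
  have hdy : ‖v‖ ≤ ‖y‖ / 2 := by
    nlinarith [sq_nonneg (‖S y‖), norm_nonneg v, norm_nonneg y]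
  have hE0 : 0 ≤ ‖x‖ / 2 * (‖y‖ / 2) - ‖u‖ * ‖v‖ := by
    have := mul_le_mul hcx hdy (norm_nonneg v) (by positivity)
    linarith
  have hprod : ‖S x‖ * ‖S y‖ ≤ ‖x‖ / 2 * (‖y‖ / 2) - ‖u‖ * ‖v‖ := by
    nlinarith [sq_nonneg (‖x‖ / 2 * ‖v‖ - ‖y‖ / 2 * ‖u‖), norm_nonneg (S x), norm_nonneg (S y),
      mul_nonneg (norm_nonneg (S x)) (norm_nonneg (S y))]
  have htri : (1/4 : ℝ) * ‖⟪x, y⟫_ℂ‖ ≤ ‖⟪(A - A * A) x, y⟫_ℂ‖ + ‖⟪u, v⟫_ℂ‖ := by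
    have heq : (1/4 : ℂ) * ⟪x, y⟫_ℂ = ⟪(A - A * A) x, y⟫_ℂ + ⟪u, v⟫_ℂ := by
      rw [hkey x y]; ring
    have h1 : ‖(1/4 : ℂ) * ⟪x, y⟫_ℂ‖ = (1/4 : ℝ) * ‖⟪x, y⟫_ℂ‖ := by
      rw [norm_mul]; norm_num
    rw [← h1, heq]
    exact norm_add_le _ _
  have huv : ‖⟪u, v⟫_ℂ‖ ≤ ‖u‖ * ‖v‖ := norm_inner_le_norm _ _
  rw [hsqrt]
  linarith
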